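/- In a directed graph g with a distinguished source s, for any non-source vertex u, the number of vertices reachable from s in g equals the number of vertices reachable from s in the induced subgraph on V(g) \ {u} plus the number of vertices v such that v is reachable from s in g but every path from s to v passes through u. -/

import Mathlib

/-- Reachability from `s` in the induced subgraph of the digraph `adj` obtained by
deleting the vertex set `B` (all steps avoid `B`). -/
def reachOutside {V : Type*} (adj : V → V → Prop) (B : Set V) (s v : V) : Prop :=
  Relation.ReflTransGen (fun a b => adj a b ∧ a ∉ B ∧ b ∉ B) s v

/-- `p` is a directed walk (as a list of vertices) from `s` to `v` in the digraph `adj`. -/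
def IsWalk {V : Type*} (adj : V → V → Prop) (s v : V) (p : List V) : Prop :=
  p.Chain' adj ∧ p.head? = some s ∧ p.getLast? = some v

lemma walk_of_reach {V : Type*} {adj : V → V → Prop} {B : Set V} {s v : V}
    (h : reachOutside adj B s v) (hs : s ∉ B) :
    ∃ p : List V, IsWalk adj s v p ∧ ∀ x ∈ p, x ∉ B := by
  induction h with
  | refl => exact ⟨[s], ⟨List.isChain_singleton s, rfl, rfl⟩, by simpa⟩
  | @tail b c hab step ih =>
    obtain ⟨p, ⟨hc, hh, hl⟩, hB⟩ := ih
    refine ⟨p ++ [c], ⟨?_, ?_, ?_⟩, ?_⟩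
    · rw [show List.Chain' adj (p ++ [c]) = List.IsChain adj (p ++ [c]) from rfl, List.isChain_append]
      refine ⟨hc, List.isChain_singleton c, ?_⟩
      intro x hx y hy
      simp only [List.head?_cons, Option.mem_def, Option.some.injEq] at hy
      subst hy
      rw [hl] at hx
      simp only [Option.mem_def, Option.some.injEq] at hx
      subst hx
      exact step.1
    · cases p with
      | nil => simp at hh
      | cons a t => simpa using hh
    · simp
    · intro x hx
      rcases List.mem_append.1 hx with h | h
      · exact hB x h
      · simp only [List.mem_singleton] at h; subst h; exact step.2.2

lemma reach_of_walk {V : Type*} {adj : V → V → Prop} {B : Set V} :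
    ∀ (p : List V) (s v : V), IsWalk adj s v p → (∀ x ∈ p, x ∉ B) →
      reachOutside adj B s v := by
  intro p
  induction p with
  | nil => rintro s v ⟨_, hh, _⟩ _; simp at hh
  | cons a t ih =>
    rintro s v ⟨hc, hh, hl⟩ hB
    simp only [List.head?_cons, Option.some.injEq] at hh
    subst hh
    cases t with
    | nil =>
      simp only [List.getLast?_singleton, Option.some.injEq] at hl
      subst hl
      exact Relation.ReflTransGen.refl
    | cons b t' =>
      have hc' := List.isChain_cons_cons.1 hc
      have hrest : reachOutside adj B b v :=
        ih b v ⟨hc'.2, rfl, by simpa using hl⟩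
          (fun x hx => hB x (List.mem_cons_of_mem _ hx))
      exact Relation.ReflTransGen.head
        ⟨hc'.1, hB a (by simp), hB b (by simp)⟩ hrest

/-- the number of vertices reachable from `s` equals the number reachable
after deleting `u` plus the number of vertices reachable from `s` all of whose
paths from `s` pass through `u`. -/
theorem stmt0 {V : Type*} [Fintype V] (adj : V → V → Prop) (s u : V) (hu : u ≠ s) :
    {v | reachOutside adj (∅ : Set V) s v}.ncard =
      {v | reachOutside adj ({u} : Set V) s v}.ncard +
        {v | reachOutside adj (∅ : Set V) s v ∧
              ∀ p : List V, IsWalk adj s v p → u ∈ p}.ncard := by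
  have hmono : ∀ v, reachOutside adj ({u} : Set V) s v → reachOutside adj (∅ : Set V) s v :=
    fun v h => Relation.ReflTransGen.mono (r := fun a b => adj a b ∧ a ∉ ({u} : Set V) ∧ b ∉ ({u} : Set V)) (p := fun a b => adj a b ∧ a ∉ (∅ : Set V) ∧ b ∉ (∅ : Set V)) (fun a b hab => ⟨hab.1, by simp, by simp⟩) s v h
  have hs : s ∉ ({u} : Set V) := by simpa using (hu.symm : s ≠ u)
  have hdisj : Disjoint {v | reachOutside adj ({u} : Set V) s v}
      {v | reachOutside adj (∅ : Set V) s v ∧ ∀ p : List V, IsWalk adj s v p → u ∈ p} := by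
    rw [Set.disjoint_left]
    intro v hv hvB
    obtain ⟨p, hw, hB⟩ := walk_of_reach hv hs
    exact hB u (hvB.2 p hw) rfl
  have hunion : {v | reachOutside adj (∅ : Set V) s v} =
      {v | reachOutside adj ({u} : Set V) s v} ∪
      {v | reachOutside adj (∅ : Set V) s v ∧ ∀ p : List V, IsWalk adj s v p → u ∈ p} := by
    ext v
    constructor
    · intro hv
      by_cases hall : ∀ p : List V, IsWalk adj s v p → u ∈ p
      · exact Or.inr ⟨hv, hall⟩
      · push_neg at hall
        obtain ⟨p, hw, hup⟩ := hall
        refine Or.inl (reach_of_walk p s v hw ?_)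
        intro x hx hxu
        rw [Set.mem_singleton_iff] at hxu
        exact hup (hxu ▸ hx)
    · rintro (h | h)
      · exact hmono v h
      · exact h.1
  rw [hunion, Set.ncard_union_eq hdisj (Set.toFinite _) (Set.toFinite _)]
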